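/- In the poset Q_f (for increasing f ∈ ω^ω): for every condition (σ, N, F) ∈ Q_f and every N' ≥ N, there is σ' ⊇ σ with (σ', N', F) ≤ (σ, N, F); consequently, for every n the sets {(σ,N,F) : n < N}, {(σ,N,F) : n < |σ|} and, for each τ ∈ (2^{<ω})^ω with |τ(i)| = f((i+1)²) for all i, the set {(σ,N,F) : τ ∈ F}, are dense in Q_f. -/

import Mathlib

open Set

/-- A condition `(σ, N, F)` of the poset `Q_f`: `σ` is a finite sequence of binary
strings with `|σ i| = f i`, `N < ω`, `F` is a finite set of sequences `τ` of binary
strings with `|τ n| = f((n+1)²)`, subject to `|F| ≤ N` and `|σ| ≤ N²`. -/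
structure QfCond (f : ℕ → ℕ) : Type where
  σ : List (List Bool)
  N : ℕ
  F : Finset (ℕ → List Bool)
  hσ : ∀ i, ∀ h : i < σ.length, (σ.get ⟨i, h⟩).length = f i
  hF : F.card ≤ N
  hσN : σ.length ≤ N ^ 2
  hτ : ∀ τ ∈ F, ∀ n, (τ n).length = f ((n + 1) ^ 2)

/-- The order of `Q_f`: `(σ', N', F') ≤ (σ, N, F)` iff `σ ⊆ σ'`, `N ≤ N'`,
`F ⊆ F'`, and for every `τ ∈ F` and `i ∈ N' \ N` there is `n < |σ'|` with
`σ' n ⊆ τ i`. -/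
def QfLE (f : ℕ → ℕ) (q p : QfCond f) : Prop :=
  p.σ <+: q.σ ∧ p.N ≤ q.N ∧ p.F ⊆ q.F ∧
  ∀ τ ∈ p.F, ∀ i, p.N ≤ i → i < q.N →
    ∃ n, ∃ h : n < q.σ.length, (q.σ.get ⟨n, h⟩) <+: τ i

lemma QfLE.refl (f : ℕ → ℕ) (p : QfCond f) : QfLE f p p :=
  ⟨List.prefix_refl _, le_refl _, Finset.Subset.refl _, fun _ _ i h1 h2 => by omega⟩

lemma QfLE.trans {f : ℕ → ℕ} {r q p : QfCond f} (h1 : QfLE f r q) (h2 : QfLE f q p) :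
    QfLE f r p := by
  obtain ⟨ha1, hb1, hc1, hd1⟩ := h1
  obtain ⟨ha2, hb2, hc2, hd2⟩ := h2
  refine ⟨ha2.trans ha1, hb2.trans hb1, hc2.trans hc1, ?_⟩
  intro τ hτ i hi1 hi2
  rcases lt_or_ge i q.N with h | h
  · obtain ⟨n, hn, hpre⟩ := hd2 τ hτ i hi1 h
    refine ⟨n, lt_of_lt_of_le hn ha1.length_le, ?_⟩
    have : r.σ.get ⟨n, lt_of_lt_of_le hn ha1.length_le⟩ = q.σ.get ⟨n, hn⟩ := by
      simp only [List.get_eq_getElem]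
      exact (ha1.getElem hn).symm
    rwa [this]
  · exact hd1 τ (hc2 hτ) i h hi2

lemma Qf_step (f : ℕ → ℕ) (hf : Monotone f) (p : QfCond f) :
    ∃ q : QfCond f, QfLE f q p ∧ q.N = p.N + 1 ∧ q.F = p.F := by
  classical
  set L := p.F.toList with hL
  have hLlen : L.length = p.F.card := p.F.length_toList
  set σ' := p.σ ++ List.ofFn
    (fun j : Fin L.length => ((L.get j) p.N).take (f (p.σ.length + j))) with hσ'
  have hlen : σ'.length = p.σ.length + L.length := by rw [hσ', List.length_append, List.length_ofFn]
  have hbound : p.σ.length + L.length ≤ (p.N + 1) ^ 2 := by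
    have h1 := p.hσN
    have h2 := p.hF
    rw [hLlen]; ring_nf; ring_nf at h1; nlinarith
  have hget : ∀ j : Fin L.length, ∀ h : p.σ.length + j < σ'.length,
      σ'.get ⟨p.σ.length + j, h⟩ = ((L.get j) p.N).take (f (p.σ.length + j)) := by
    intro j h
    simp only [List.get_eq_getElem, hσ']
    rw [List.getElem_append_right (by omega)]
    simp
  refine ⟨⟨σ', p.N + 1, p.F, ?_, p.hF.trans (Nat.le_succ _), by omega, p.hτ⟩,
    ⟨List.prefix_append _ _, Nat.le_succ _, Finset.Subset.refl _, ?_⟩, rfl, rfl⟩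
  · -- hσ
    intro i h
    rcases lt_or_ge i p.σ.length with hi | hi
    · have : σ'.get ⟨i, h⟩ = p.σ.get ⟨i, hi⟩ := by
        simp only [List.get_eq_getElem, hσ']
        exact List.getElem_append_left hi
      rw [this]; exact p.hσ i hi
    · have hj : i - p.σ.length < L.length := by omega
      have heq : i = p.σ.length + (⟨i - p.σ.length, hj⟩ : Fin L.length) := by simp; omega
      have hmem : L.get ⟨i - p.σ.length, hj⟩ ∈ p.F := by
        rw [← Finset.mem_toList]; exact List.get_mem L _
      have hτlen := p.hτ _ hmem p.N
      have hfle : f i ≤ f ((p.N + 1) ^ 2) := hf (by omega)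
      rw [show (⟨i, h⟩ : Fin σ'.length) = ⟨p.σ.length + (⟨i - p.σ.length, hj⟩ : Fin L.length), by omega⟩ by simp; omega]
      have hval : p.σ.length + ((⟨i - p.σ.length, hj⟩ : Fin L.length) : ℕ) = i := by
        simp; omega
      rw [hget]
      simp only [List.length_take, hτlen, hval]
      omega
  · -- density condition
    intro τ hτm i hi1 hi2
    replace hi2 : i < p.N + 1 := hi2
    have hi : i = p.N := by omega
    subst hi
    obtain ⟨j, hj⟩ := List.mem_iff_get.mp (Finset.mem_toList.mpr hτm)
    have hjlt := j.isLt
    refine ⟨p.σ.length + j, show p.σ.length + (j : ℕ) < σ'.length by rw [hlen]; exact Nat.add_lt_add_left j.isLt _, ?_⟩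
    rw [hget]
    rw [hj]
    exact List.take_prefix _ _

lemma Qf_incr (f : ℕ → ℕ) (hf : Monotone f) :
    ∀ k (p : QfCond f), ∃ q : QfCond f, QfLE f q p ∧ q.N = p.N + k ∧ q.F = p.F := by
  intro k
  induction k with
  | zero => exact fun p => ⟨p, QfLE.refl f p, rfl, rfl⟩
  | succ k ih =>
    intro p
    obtain ⟨q, hq, hqN, hqF⟩ := ih p
    obtain ⟨r, hr, hrN, hrF⟩ := Qf_step f hf q
    exact ⟨r, hr.trans hq, by omega, by rw [hrF, hqF]⟩

lemma Qf_extσ (f : ℕ → ℕ) (hf : Monotone f) (p : QfCond f) (m : ℕ) (hm : m ≤ p.N ^ 2) :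
    ∃ q : QfCond f, QfLE f q p ∧ m ≤ q.σ.length ∧ q.N = p.N ∧ q.F = p.F := by
  rcases le_or_gt m p.σ.length with h | h
  · exact ⟨p, QfLE.refl f p, h, rfl, rfl⟩
  set σ' := p.σ ++ List.ofFn
    (fun j : Fin (m - p.σ.length) => List.replicate (f (p.σ.length + j)) false) with hσ'
  have hlen : σ'.length = m := by
    rw [hσ', List.length_append, List.length_ofFn]; omega
  refine ⟨⟨σ', p.N, p.F, ?_, p.hF, by omega, p.hτ⟩,
    ⟨List.prefix_append _ _, le_refl _, Finset.Subset.refl _,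
      fun _ _ i h1 h2 => by exact absurd (lt_of_le_of_lt h1 h2) (lt_irrefl _)⟩,
    le_of_eq hlen.symm, rfl, rfl⟩
  intro i h'
  simp only [List.get_eq_getElem, hσ']
  rcases lt_or_ge i p.σ.length with hi | hi
  · rw [List.getElem_append_left hi]
    exact p.hσ i hi
  · rw [List.getElem_append_right hi]
    simp only [List.getElem_ofFn, List.length_replicate]
    congr 1
    omega


/-- Density propertiesof `Q_f` for increasing `f`: the number `N` can be
increased arbitrarily while keeping `F` (extending `σ` suitably), and
consequently the sets `{(σ,N,F) : n < N}`, `{(σ,N,F) : n < |σ|}` and, for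
suitable `τ`, `{(σ,N,F) : τ ∈ F}` are dense in `Q_f`. -/
theorem stmt18 (f : ℕ → ℕ) (hf : Monotone f) :
    (∀ p : QfCond f, ∀ N' : ℕ, p.N ≤ N' →
      ∃ q : QfCond f, QfLE f q p ∧ q.N = N' ∧ q.F = p.F) ∧
    (∀ n : ℕ, ∀ p : QfCond f, ∃ q : QfCond f, QfLE f q p ∧ n < q.N) ∧
    (∀ n : ℕ, ∀ p : QfCond f, ∃ q : QfCond f, QfLE f q p ∧ n < q.σ.length) ∧
    (∀ τ : ℕ → List Bool, (∀ i, (τ i).length = f ((i + 1) ^ 2)) →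
      ∀ p : QfCond f, ∃ q : QfCond f, QfLE f q p ∧ τ ∈ q.F) := by
  have main : ∀ p : QfCond f, ∀ N' : ℕ, p.N ≤ N' →
      ∃ q : QfCond f, QfLE f q p ∧ q.N = N' ∧ q.F = p.F := by
    intro p N' hN'
    obtain ⟨q, hq, hqN, hqF⟩ := Qf_incr f hf (N' - p.N) p
    exact ⟨q, hq, by omega, hqF⟩
  refine ⟨main, ?_, ?_, ?_⟩
  · intro n p
    obtain ⟨q, hq, hqN, _⟩ := main p (max p.N (n + 1)) (le_max_left _ _)
    exact ⟨q, hq, by omega⟩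
  · intro n p
    obtain ⟨q, hq, hqN, _⟩ := main p (max p.N (n + 1)) (le_max_left _ _)
    have hm : n + 1 ≤ q.N ^ 2 := by
      have h1 : n + 1 ≤ q.N := by omega
      nlinarith
    obtain ⟨r, hr, hrlen, _, _⟩ := Qf_extσ f hf q (n + 1) hm
    exact ⟨r, hr.trans hq, by omega⟩
  · intro τ hτlen p
    obtain ⟨q, hq, hqN, hqF⟩ := main p (p.N + 1) (Nat.le_succ _)
    classical
    have hcard : (insert τ q.F).card ≤ q.N := by
      calc (insert τ q.F).card ≤ q.F.card + 1 := Finset.card_insert_le _ _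
        _ ≤ q.N := by have := q.hF; have := p.hF; rw [hqF]; omega
    have hτ' : ∀ τ' ∈ insert τ q.F, ∀ n, (τ' n).length = f ((n + 1) ^ 2) := by
      intro τ' hτ' n
      rcases Finset.mem_insert.mp hτ' with h | h
      · rw [h]; exact hτlen n
      · exact q.hτ τ' h n
    set r : QfCond f := ⟨q.σ, q.N, insert τ q.F, q.hσ, hcard, q.hσN, hτ'⟩ with hr
    have hle : QfLE f r q :=
      ⟨List.prefix_refl _, le_refl _, Finset.subset_insert _ _,
        fun _ _ i h1 h2 => by exact absurd (lt_of_le_of_lt h1 h2) (lt_irrefl _)⟩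
    exact ⟨r, hle.trans hq, Finset.mem_insert_self _ _⟩
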